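/- H₀M possesses a total Elgot iteration as a least fixpoint: for every f : X → H₀M (Y ⊕ X), the map f^‡ defined by f^‡ x = ⊔ₙ f⁽ⁿ⁾ x satisfies the fixpoint law f^‡ = ([η, f^‡])^† ∘ f, and it is the least pre-fixpoint: for every g : X → H₀M Y with ([η, g])^†(f x) ⊑ g x for all x, one has f^‡ x ⊑ g x for all x. -/

import Mathlib

open scoped ENNReal NNReal
open Classical

universe u v w

/-- Raw trajectories: a duration in `ℝ≥0∞` and a partial evolution `ℝ≥0 → Option X`. -/
abbrev Traj (X : Type u) := ℝ≥0∞ × (ℝ≥0 → Option X)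

/-- The flattening condition: if the duration is finite, the evolution is constant
from the duration onwards.  Membership in `H₀M X` means exactly `Flat`. -/
def Flat {X : Type u} (p : Traj X) : Prop :=
  ∀ t : ℝ≥0, p.1 ≤ (t : ℝ≥0∞) → p.2 t = p.2 p.1.toNNReal

/-- The unit of `H₀M`. -/
def eta {X : Type u} (x : X) : Traj X := (0, fun _ => some x)

/-- The Kleisli lifting `f^†` of the monad `H₀M`. -/
noncomputable def kl {X : Type u} {Y : Type v} (f : X → Traj Y) (p : Traj X) : Traj Y :=
  if p.1 = ⊤ then (p.1, fun t => (p.2 t).bind fun x' => (f x').2 0)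
  else
    match p.2 p.1.toNNReal with
    | none => (p.1, fun t => (p.2 t).bind fun x' => (f x').2 0)
    | some x =>
        (p.1 + (f x).1,
          fun t =>
            if (t : ℝ≥0∞) < p.1 then (p.2 t).bind fun x' => (f x').2 0
            else (f x).2 (t - p.1.toNNReal))

/-- Membership in `H₊ X ⊆ H₀M X`: the evolution is not everywhere `none`, and it is
defined at every time instant strictly below the duration. -/
def memHp {X : Type u} (p : Traj X) : Prop :=
  p.2 ≠ (fun _ => none) ∧ ∀ t : ℝ≥0, (t : ℝ≥0∞) < p.1 → p.2 t ≠ none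

/-- Membership in `H X ⊆ H₀M X`: either the evolution is total, or the duration is `∞`
and the domain of the evolution is downward closed. -/
def memH {X : Type u} (p : Traj X) : Prop :=
  (∀ t, p.2 t ≠ none) ∨
    (p.1 = ⊤ ∧ ∀ s t : ℝ≥0, s ≤ t → p.2 t ≠ none → p.2 s ≠ none)

/-- The approximation order `⊑` on `H₀M X`. -/
def TrajLE {X : Type u} (p q : Traj X) : Prop :=
  p.1 ≤ q.1 ∧ (∀ t, p.2 t ≠ none → q.2 t = p.2 t) ∧
    (p.1 ≠ ⊤ → p.2 p.1.toNNReal ≠ none → p.1 = q.1)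

/-- Join of an ω-chain in `H₀M X`: the duration is the supremum of the durations, and
the evolution at `t` is the common value `(c i).2 t` whenever it is `≠ none` for some
`i`, and `none` otherwise. -/
noncomputable def chainJoin {X : Type u} (c : ℕ → Traj X) : Traj X :=
  (⨆ i, (c i).1,
    fun t => if h : ∃ i, (c i).2 t ≠ none then (c h.choose).2 t else none)

/-- `d⋆ = sup { s < d ∣ e is defined on [0, s) }`. -/
noncomputable def dstar {X : Type u} (p : Traj X) : ℝ≥0∞ :=
  sSup {s : ℝ≥0∞ | s < p.1 ∧ ∀ t : ℝ≥0, (t : ℝ≥0∞) < s → p.2 t ≠ none}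

/-- The retraction `ρ : H₀M X → H₀M X` onto `H X`. -/
noncomputable def rho {X : Type u} (p : Traj X) : Traj X :=
  ((if ∀ t, p.2 t ≠ none then p.1 else ⊤),
    fun t =>
      if (t : ℝ≥0∞) ≤ dstar p then p.2 t
      else if ∀ t', p.2 t' ≠ none then p.2 (dstar p).toNNReal else none)

/-- The iterates `f⁽ⁿ⁾` of `f : X → H₀M (Y ⊕ X)`. -/
noncomputable def iter {X Y : Type u} (f : X → Traj (Y ⊕ X)) : ℕ → X → Traj Y
  | 0, _ => (0, fun _ => none)
  | n + 1, x => kl (Sum.elim eta (iter f n)) (f x)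

/-- The least-fixpoint iteration `f^‡ x = ⊔ₙ f⁽ⁿ⁾ x`. -/
noncomputable def iterStar {X Y : Type u} (f : X → Traj (Y ⊕ X)) (x : X) : Traj Y :=
  chainJoin fun n => iter f n x

/-- `f : X → H₊ (A ⊕ B)` is progressive in `B` (guarded in the second summand). -/
def Prog {X : Type u} {A B : Type v} (f : X → Traj (A ⊕ B)) : Prop :=
  ∀ x, ∃ a : A, (f x).2 0 = some (Sum.inl a)

section Aux

variable {Z : Type w} {W : Type v}

lemma trajLE_refl (p : Traj Z) : TrajLE p p :=
  ⟨le_rfl, fun _ _ => rfl, fun _ _ => rfl⟩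

lemma trajLE_trans {p q r : Traj Z} (h1 : TrajLE p q) (h2 : TrajLE q r) : TrajLE p r := by
  obtain ⟨d1, e1, f1⟩ := h1
  obtain ⟨d2, e2, f2⟩ := h2
  refine ⟨d1.trans d2, fun t ht => ?_, fun hfin hev => ?_⟩
  · rw [e2 t (by rw [e1 t ht]; exact ht), e1 t ht]
  · have hpq := f1 hfin hev
    have hq : q.2 q.1.toNNReal ≠ none := by
      rw [← hpq, e1 _ hev]; exact hev
    have := f2 (by rw [← hpq]; exact hfin) hq
    rw [hpq, this]

lemma traj_bot_le (q : Traj Z) : TrajLE ((0 : ℝ≥0∞), fun _ => (none : Option Z)) q :=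
  ⟨zero_le, fun _ ht => absurd rfl ht, fun _ h => absurd rfl h⟩

lemma kl_top (g : Z → Traj W) (p : Traj Z) (h : p.1 = ⊤) :
    kl g p = (p.1, fun t => (p.2 t).bind fun z => (g z).2 0) := by
  unfold kl; rw [if_pos h]

lemma kl_none (g : Z → Traj W) (p : Traj Z) (h1 : p.1 ≠ ⊤)
    (h2 : p.2 p.1.toNNReal = none) :
    kl g p = (p.1, fun t => (p.2 t).bind fun z => (g z).2 0) := by
  unfold kl; rw [if_neg h1, h2]

lemma kl_some (g : Z → Traj W) (p : Traj Z) (h1 : p.1 ≠ ⊤) {z : Z}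
    (h2 : p.2 p.1.toNNReal = some z) :
    kl g p = (p.1 + (g z).1,
      fun t : ℝ≥0 => if (t : ℝ≥0∞) < p.1 then (p.2 t).bind fun z' => (g z').2 0
        else (g z).2 (t - p.1.toNNReal)) := by
  unfold kl; rw [if_neg h1, h2]

end Aux

section Aux2

variable {Z : Type w} {W : Type v}

def TChain (c : ℕ → Traj Z) : Prop := ∀ n, TrajLE (c n) (c (n + 1))

lemma tchain_le {c : ℕ → Traj Z} (hc : TChain c) {n m : ℕ} (h : n ≤ m) :
    TrajLE (c n) (c m) := by
  induction m, h using Nat.le_induction with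
  | base => exact trajLE_refl _
  | succ m hm ih => exact trajLE_trans ih (hc m)

lemma tchain_agree {c : ℕ → Traj Z} (hc : TChain c) {i j : ℕ} {t : ℝ≥0}
    (hi : (c i).2 t ≠ none) (hj : (c j).2 t ≠ none) : (c i).2 t = (c j).2 t := by
  rcases le_total i j with h | h
  · exact ((tchain_le hc h).2.1 t hi).symm
  · exact (tchain_le hc h).2.1 t hj

lemma chainJoin_dur (c : ℕ → Traj Z) : (chainJoin c).1 = ⨆ i, (c i).1 := rfl

lemma chainJoin_ev_none (c : ℕ → Traj Z) {t : ℝ≥0} (h : ∀ n, (c n).2 t = none) :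
    (chainJoin c).2 t = none := by
  simp only [chainJoin]
  rw [dif_neg]
  push_neg
  exact h

lemma chainJoin_ev_eq {c : ℕ → Traj Z} (hc : TChain c) {n : ℕ} {t : ℝ≥0}
    (hn : (c n).2 t ≠ none) : (chainJoin c).2 t = (c n).2 t := by
  have hex : ∃ i, (c i).2 t ≠ none := ⟨n, hn⟩
  simp only [chainJoin]
  rw [dif_pos hex]
  exact tchain_agree hc hex.choose_spec hn

lemma chainJoin_ev_transport {c d : ℕ → Traj Z} {t s : ℝ≥0}
    (hc : TChain c) (hd : TChain d) (h : ∀ n, (c n).2 t = (d n).2 s) :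
    (chainJoin c).2 t = (chainJoin d).2 s := by
  by_cases hex : ∃ n, (d n).2 s ≠ none
  · obtain ⟨n, hn⟩ := hex
    rw [chainJoin_ev_eq hd hn, chainJoin_ev_eq hc (by rw [h n]; exact hn), h n]
  · push_neg at hex
    rw [chainJoin_ev_none _ (fun n => by rw [h n]; exact hex n), chainJoin_ev_none _ hex]

lemma chainJoin_const (p : Traj Z) : chainJoin (fun _ : ℕ => p) = p := by
  refine Prod.ext ?_ ?_
  · exact iSup_const
  · funext t
    simp only [chainJoin]
    by_cases h : p.2 t = none
    · rw [dif_neg (by push_neg; exact fun _ => h), h]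
    · rw [dif_pos ⟨0, h⟩]

lemma chainJoin_shift {c : ℕ → Traj Z} (hc : TChain c) :
    chainJoin c = chainJoin (fun n => c (n + 1)) := by
  have hc' : TChain (fun n => c (n + 1)) := fun n => hc (n + 1)
  refine Prod.ext ?_ ?_
  · refine le_antisymm (iSup_le fun n => ?_) (iSup_le fun n => ?_)
    · exact le_trans (hc n).1 (le_iSup (fun m => (c (m + 1)).1) n)
    · exact le_iSup (fun m => (c m).1) (n + 1)
  · funext t
    by_cases hex : ∃ n, (c n).2 t ≠ none
    · obtain ⟨n, hn⟩ := hex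
      have hn' : (c (n + 1)).2 t ≠ none := by rw [(hc n).2.1 t hn]; exact hn
      rw [chainJoin_ev_eq hc hn, chainJoin_ev_eq hc' hn']
      exact ((hc n).2.1 t hn).symm
    · push_neg at hex
      rw [chainJoin_ev_none _ hex, chainJoin_ev_none _ (fun n => hex (n + 1))]

lemma kl_mono {g g' : Z → Traj W} (hgg' : ∀ z, TrajLE (g z) (g' z)) (p : Traj Z) :
    TrajLE (kl g p) (kl g' p) := by
  by_cases h1 : p.1 = ⊤
  · rw [kl_top g p h1, kl_top g' p h1]
    refine ⟨le_rfl, fun t ht => ?_, fun h _ => absurd h1 h⟩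
    cases hpt : p.2 t with
    | none => dsimp only at ht; rw [hpt] at ht; exact absurd rfl ht
    | some z =>
      dsimp only at ht ⊢; rw [hpt] at ht; rw [hpt]
      exact (hgg' z).2.1 0 ht
  · cases h2 : p.2 p.1.toNNReal with
    | none =>
      rw [kl_none g p h1 h2, kl_none g' p h1 h2]
      refine ⟨le_rfl, fun t ht => ?_, fun _ _ => rfl⟩
      cases hpt : p.2 t with
      | none => dsimp only at ht; rw [hpt] at ht; exact absurd rfl ht
      | some z =>
        dsimp only at ht ⊢; rw [hpt] at ht; rw [hpt]
        exact (hgg' z).2.1 0 ht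
    | some z =>
      rw [kl_some g p h1 h2, kl_some g' p h1 h2]
      refine ⟨add_le_add_right (hgg' z).1 _, fun t ht => ?_, fun hfin hev => ?_⟩
      · by_cases hlt : (t : ℝ≥0∞) < p.1
        · dsimp only at ht ⊢; simp only [if_pos hlt] at ht ⊢
          cases hpt : p.2 t with
          | none => rw [hpt] at ht; exact absurd rfl ht
          | some z' =>
            rw [hpt] at ht
            exact (hgg' z').2.1 0 ht
        · dsimp only at ht ⊢; simp only [if_neg hlt] at ht ⊢
          exact (hgg' z).2.1 _ ht
      · dsimp only at hfin hev ⊢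
        have hgz : (g z).1 ≠ ⊤ := fun h => hfin (by rw [h, add_top])
        have hT : (p.1 + (g z).1).toNNReal = p.1.toNNReal + (g z).1.toNNReal :=
          ENNReal.toNNReal_add h1 hgz
        have hcoe : ((p.1 + (g z).1).toNNReal : ℝ≥0∞) = p.1 + (g z).1 :=
          ENNReal.coe_toNNReal hfin
        have hnlt : ¬ (((p.1 + (g z).1).toNNReal : ℝ≥0∞) < p.1) := by
          rw [hcoe]; exact not_lt.2 le_self_add
        rw [if_neg hnlt, hT, add_tsub_cancel_left] at hev
        rw [(hgg' z).2.2 hgz hev]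

end Aux2

section Aux3

variable {Z : Type w} {W : Type v}

lemma kl_flat {g : Z → Traj W} {p : Traj Z} (hp : Flat p) (hg : ∀ z, Flat (g z)) :
    Flat (kl g p) := by
  by_cases h1 : p.1 = ⊤
  · rw [kl_top g p h1]
    intro t ht
    dsimp only at ht
    rw [h1] at ht
    exact absurd (top_le_iff.mp ht) (ENNReal.coe_ne_top)
  · cases h2 : p.2 p.1.toNNReal with
    | none =>
      rw [kl_none g p h1 h2]
      intro t ht
      dsimp only at ht ⊢
      rw [hp t ht, h2]
    | some z =>
      rw [kl_some g p h1 h2]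
      intro t ht
      dsimp only at ht ⊢
      have hD : p.1 + (g z).1 ≠ ⊤ := by
        intro h; rw [h] at ht; exact absurd (top_le_iff.mp ht) (ENNReal.coe_ne_top)
      have hgz : (g z).1 ≠ ⊤ := fun h => hD (by rw [h, add_top])
      have hT : (p.1 + (g z).1).toNNReal = p.1.toNNReal + (g z).1.toNNReal :=
        ENNReal.toNNReal_add h1 hgz
      have hcoe : ((p.1 + (g z).1).toNNReal : ℝ≥0∞) = p.1 + (g z).1 :=
        ENNReal.coe_toNNReal hD
      have hp1t : p.1 ≤ (t : ℝ≥0∞) := le_trans le_self_add ht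
      have hnlt1 : ¬ ((t : ℝ≥0∞) < p.1) := not_lt.2 hp1t
      have hnlt2 : ¬ (((p.1 + (g z).1).toNNReal : ℝ≥0∞) < p.1) := by
        rw [hcoe]; exact not_lt.2 le_self_add
      rw [if_neg hnlt1, if_neg hnlt2, hT, add_tsub_cancel_left]
      have hA : (p.1.toNNReal : ℝ≥0∞) = p.1 := ENNReal.coe_toNNReal h1
      have hsub : ((t - p.1.toNNReal : ℝ≥0) : ℝ≥0∞) = (t : ℝ≥0∞) - p.1 := by
        rw [ENNReal.coe_sub, hA]
      have hle : (g z).1 ≤ ((t - p.1.toNNReal : ℝ≥0) : ℝ≥0∞) := by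
        rw [hsub]
        exact ENNReal.le_sub_of_add_le_left h1 ht
      exact hg z _ hle

lemma chainJoin_le {c : ℕ → Traj Z} {q : Traj Z} (hc : TChain c)
    (hflat : ∀ n, Flat (c n)) (h : ∀ n, TrajLE (c n) q) : TrajLE (chainJoin c) q := by
  refine ⟨iSup_le fun n => (h n).1, fun t ht => ?_, fun hfin hev => ?_⟩
  · have hex : ∃ n, (c n).2 t ≠ none := by
      by_contra hno; push_neg at hno; exact ht (chainJoin_ev_none c hno)
    obtain ⟨n, hn⟩ := hex
    rw [chainJoin_ev_eq hc hn, (h n).2.1 t hn]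
  · have hex : ∃ n, (c n).2 (chainJoin c).1.toNNReal ≠ none := by
      by_contra hno; push_neg at hno; exact hev (chainJoin_ev_none c hno)
    obtain ⟨n, hn⟩ := hex
    have hn1 : (c n).1 ≤ (chainJoin c).1 := le_iSup (fun m => (c m).1) n
    have hcoe : ((chainJoin c).1.toNNReal : ℝ≥0∞) = (chainJoin c).1 :=
      ENNReal.coe_toNNReal hfin
    have h2 : (c n).2 (c n).1.toNNReal ≠ none := by
      rw [← hflat n (chainJoin c).1.toNNReal (by rw [hcoe]; exact hn1)]
      exact hn
    have h3 : (c n).1 ≠ ⊤ := fun htop => hfin (top_le_iff.mp (htop ▸ hn1))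
    have h4 : (c n).1 = q.1 := (h n).2.2 h3 h2
    exact le_antisymm (iSup_le fun m => (h m).1) (h4 ▸ hn1)

end Aux3

section Aux4

variable {Z : Type w} {W : Type v}

lemma kl_chainJoin (g : ℕ → Z → Traj W) (hg : ∀ z, TChain (fun n => g n z)) (p : Traj Z) :
    chainJoin (fun n => kl (g n) p) = kl (fun z => chainJoin (fun n => g n z)) p := by
  have hc : TChain (fun n => kl (g n) p) := fun n => kl_mono (fun z => hg z n) p
  by_cases h1 : p.1 = ⊤
  · rw [kl_top (fun z => chainJoin fun n => g n z) p h1]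
    refine Prod.ext ?_ ?_
    · show (⨆ n, (kl (g n) p).1) = p.1
      have hdur : ∀ n, (kl (g n) p).1 = p.1 := fun n => by rw [kl_top (g n) p h1]
      calc ⨆ n, (kl (g n) p).1 = ⨆ _ : ℕ, p.1 := by simp only [hdur]
        _ = p.1 := iSup_const
    · funext t
      show (chainJoin fun n => kl (g n) p).2 t
          = (p.2 t).bind fun z => (chainJoin fun n => g n z).2 0
      cases hpt : p.2 t with
      | none =>
        exact chainJoin_ev_none _
          (fun n => by rw [kl_top (g n) p h1]; dsimp only; rw [hpt]; rfl)
      | some z =>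
        exact chainJoin_ev_transport hc (hg z)
          (fun n => by rw [kl_top (g n) p h1]; dsimp only; rw [hpt]; rfl)
  · cases h2 : p.2 p.1.toNNReal with
    | none =>
      rw [kl_none (fun z => chainJoin fun n => g n z) p h1 h2]
      refine Prod.ext ?_ ?_
      · show (⨆ n, (kl (g n) p).1) = p.1
        have hdur : ∀ n, (kl (g n) p).1 = p.1 := fun n => by rw [kl_none (g n) p h1 h2]
        calc ⨆ n, (kl (g n) p).1 = ⨆ _ : ℕ, p.1 := by simp only [hdur]
          _ = p.1 := iSup_const
      · funext t
        show (chainJoin fun n => kl (g n) p).2 t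
            = (p.2 t).bind fun z => (chainJoin fun n => g n z).2 0
        cases hpt : p.2 t with
        | none =>
          exact chainJoin_ev_none _
            (fun n => by rw [kl_none (g n) p h1 h2]; dsimp only; rw [hpt]; rfl)
        | some z =>
          exact chainJoin_ev_transport hc (hg z)
            (fun n => by rw [kl_none (g n) p h1 h2]; dsimp only; rw [hpt]; rfl)
    | some x0 =>
      rw [kl_some (fun z => chainJoin fun n => g n z) p h1 h2]
      refine Prod.ext ?_ ?_
      · show (⨆ n, (kl (g n) p).1) = p.1 + (chainJoin fun n => g n x0).1
        have hdur : ∀ n, (kl (g n) p).1 = p.1 + (g n x0).1 := fun n => by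
          rw [kl_some (g n) p h1 h2]
        calc ⨆ n, (kl (g n) p).1 = ⨆ n, (p.1 + (g n x0).1) := by simp only [hdur]
          _ = p.1 + ⨆ n, (g n x0).1 := (ENNReal.add_iSup _).symm
          _ = p.1 + (chainJoin fun n => g n x0).1 := rfl
      · funext t
        show (chainJoin fun n => kl (g n) p).2 t
            = if (t : ℝ≥0∞) < p.1 then (p.2 t).bind fun z => (chainJoin fun n => g n z).2 0
              else (chainJoin fun n => g n x0).2 (t - p.1.toNNReal)
        by_cases hlt : (t : ℝ≥0∞) < p.1
        · rw [if_pos hlt]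
          cases hpt : p.2 t with
          | none =>
            exact chainJoin_ev_none _
              (fun n => by rw [kl_some (g n) p h1 h2]; dsimp only; rw [if_pos hlt, hpt]; rfl)
          | some z =>
            exact chainJoin_ev_transport hc (hg z)
              (fun n => by rw [kl_some (g n) p h1 h2]; dsimp only; rw [if_pos hlt, hpt]; rfl)
        · rw [if_neg hlt]
          exact chainJoin_ev_transport hc (hg x0)
            (fun n => by rw [kl_some (g n) p h1 h2]; dsimp only; rw [if_neg hlt])

end Aux4

section Aux5

variable {X Y : Type u}

lemma iter_chain (f : X → Traj (Y ⊕ X)) :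
    ∀ (n : ℕ) (x : X), TrajLE (iter f n x) (iter f (n + 1) x) := by
  intro n
  induction n with
  | zero => intro x; exact traj_bot_le _
  | succ n ih =>
    intro x
    exact kl_mono (fun z => by
      cases z with
      | inl y => exact trajLE_refl _
      | inr x' => exact ih x') (f x)

lemma iter_flat (f : X → Traj (Y ⊕ X)) (hf : ∀ x, Flat (f x)) :
    ∀ (n : ℕ) (x : X), Flat (iter f n x) := by
  intro n
  induction n with
  | zero => intro x t _; rfl
  | succ n ih =>
    intro x
    exact kl_flat (hf x) (fun z => by
      cases z with
      | inl y => intro t _; rfl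
      | inr x' => exact ih x')

end Aux5


/-- `H₀M` possesses a total Elgot iteration as a least fixpoint: `f^‡` satisfies the
fixpoint law and is the least pre-fixpoint. -/
theorem iterStar_least_fixpoint {X Y : Type u} (f : X → Traj (Y ⊕ X))
    (hf : ∀ x, Flat (f x)) :
    (∀ x, iterStar f x = kl (Sum.elim eta (iterStar f)) (f x)) ∧
    (∀ g : X → Traj Y, (∀ x, Flat (g x)) →
      (∀ x, TrajLE (kl (Sum.elim eta g) (f x)) (g x)) →
      ∀ x, TrajLE (iterStar f x) (g x)) := by
  have hchain : ∀ x, TChain (fun n => iter f n x) := fun x n => iter_chain f n x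
  constructor
  · intro x
    have hpt : ∀ z : Y ⊕ X, TChain (fun n => Sum.elim eta (iter f n) z) := by
      intro z
      cases z with
      | inl y => intro n; exact trajLE_refl _
      | inr x' => intro n; exact iter_chain f n x'
    have key := kl_chainJoin (fun n => Sum.elim eta (iter f n)) hpt (f x)
    have hG : (fun z => chainJoin (fun n => Sum.elim eta (iter f n) z))
        = Sum.elim eta (iterStar f) := by
      funext z
      cases z with
      | inl y => exact chainJoin_const (eta y)
      | inr x' => rfl
    rw [← hG]
    calc iterStar f x = chainJoin (fun n => iter f (n + 1) x) := chainJoin_shift (hchain x)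
      _ = chainJoin (fun n => kl (Sum.elim eta (iter f n)) (f x)) := rfl
      _ = kl (fun z => chainJoin (fun n => Sum.elim eta (iter f n) z)) (f x) := key
  · intro g hgflat hgpre x
    have hnall : ∀ (n : ℕ) (x : X), TrajLE (iter f n x) (g x) := by
      intro n
      induction n with
      | zero => intro x; exact traj_bot_le _
      | succ n ih =>
        intro x
        refine trajLE_trans ?_ (hgpre x)
        exact kl_mono (fun z => by
          cases z with
          | inl y => exact trajLE_refl _
          | inr x' => exact ih x') (f x)
    exact chainJoin_le (hchain x) (fun n => iter_flat f hf n x) (fun n => hnall n x)
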